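/- Let σ > 0, let D ≥ 1, and let w_1, …, w_D be independent random vectors in ℝ^d whose coordinates are independent real Gaussian random variables with mean 0 and variance 1/σ². Then for all x, y ∈ ℝ^d, Var(φ(x) · φ(y)) = (1/(2D)) · (1 − exp(−z²))², where z = ‖x − y‖/σ. -/

import Mathlib

open scoped RealInnerProductSpace BigOperators
open MeasureTheory ProbabilityTheory

/-- The random feature map `φ(x) = D^{-1/2} (sin(w₁·x), …, sin(w_D·x), cos(w₁·x), …, cos(w_D·x))`. -/
noncomputable def randomFeatureMap {d D : ℕ} (w : Fin D → EuclideanSpace ℝ (Fin d))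
    (x : EuclideanSpace ℝ (Fin d)) : EuclideanSpace ℝ (Fin D ⊕ Fin D) :=
  WithLp.toLp 2 fun i => Real.sqrt (1 / D) *
    Sum.elim (fun j => Real.sin ⟪w j, x⟫) (fun j => Real.cos ⟪w j, x⟫) i

section RFFHelpers

open MeasureTheory ProbabilityTheory Real Complex
open scoped NNReal ENNReal

lemma RFF_integrable_cexp {a : ℝ} (c : ℝ) (ha : 0 < a) :
    Integrable (fun x : ℝ => Complex.exp (I * c * x) * Complex.exp (-(a:ℂ) * x ^ 2)) := by
  have h := integrable_cexp_quadratic (b := (a:ℂ)) (by simpa using ha) (I * c) 0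
  refine h.congr (Filter.Eventually.of_forall fun x => ?_)
  simp only [← Complex.exp_add]
  ring_nf

lemma RFF_cos_sin_integral {a : ℝ} (ha : 0 < a) (c : ℝ) :
    (∫ x : ℝ, Real.cos (c * x) * Real.exp (-a * x ^ 2)) =
        Real.sqrt (π / a) * Real.exp (-c ^ 2 / (4 * a)) ∧
    (∫ x : ℝ, Real.sin (c * x) * Real.exp (-a * x ^ 2)) = 0 := by
  have hb : (0:ℝ) < ((a:ℂ)).re := by simpa using ha
  have h := fourierIntegral_gaussian hb (c : ℂ)
  have hre : ∀ x : ℝ, (Complex.exp (I * c * x) * Complex.exp (-(a:ℂ) * x ^ 2)).re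
      = Real.cos (c * x) * Real.exp (-a * x ^ 2) := by
    intro x
    have h1 : I * (c:ℂ) * (x:ℂ) = ((c * x : ℝ) : ℂ) * I := by push_cast; ring
    have h2 : (-(a:ℂ) * (x:ℂ) ^ 2) = ((-a * x ^ 2 : ℝ) : ℂ) := by push_cast; ring
    rw [h1, h2, ← Complex.ofReal_exp, Complex.mul_re, Complex.ofReal_re, Complex.ofReal_im,
      Complex.exp_ofReal_mul_I_re, Complex.exp_ofReal_mul_I_im]
    ring
  have him : ∀ x : ℝ, (Complex.exp (I * c * x) * Complex.exp (-(a:ℂ) * x ^ 2)).im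
      = Real.sin (c * x) * Real.exp (-a * x ^ 2) := by
    intro x
    have h1 : I * (c:ℂ) * (x:ℂ) = ((c * x : ℝ) : ℂ) * I := by push_cast; ring
    have h2 : (-(a:ℂ) * (x:ℂ) ^ 2) = ((-a * x ^ 2 : ℝ) : ℂ) := by push_cast; ring
    rw [h1, h2, ← Complex.ofReal_exp, Complex.mul_im, Complex.ofReal_re, Complex.ofReal_im,
      Complex.exp_ofReal_mul_I_re, Complex.exp_ofReal_mul_I_im]
    ring
  have hR : ((π : ℂ) / (a:ℂ)) ^ (1 / 2 : ℂ) * Complex.exp (-(c:ℂ) ^ 2 / (4 * (a:ℂ)))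
      = ((Real.sqrt (π / a) * Real.exp (-c ^ 2 / (4 * a)) : ℝ) : ℂ) := by
    have h1 : ((π / a : ℝ) : ℂ) ^ ((1 / 2 : ℝ) : ℂ) = ((( (π / a : ℝ)) ^ (1/2 : ℝ) : ℝ) : ℂ) :=
      (Complex.ofReal_cpow (by positivity) _).symm
    have h2 : (-(c:ℂ) ^ 2 / (4 * (a:ℂ))) = ((-c ^ 2 / (4 * a) : ℝ) : ℂ) := by push_cast; ring
    rw [h2, ← Complex.ofReal_exp,
      show ((π:ℂ)) / (a:ℂ) = ((π / a : ℝ) : ℂ) by norm_cast,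
      show ((1:ℂ)/2) = (((1:ℝ)/2 : ℝ) : ℂ) by norm_num, h1, Real.sqrt_eq_rpow,
      ← Complex.ofReal_mul]
  have hint := RFF_integrable_cexp (a := a) c ha
  constructor
  · have h' := integral_re (μ := (volume : Measure ℝ)) hint
    simp only [RCLike.re_to_complex, hre] at h'
    rw [h', h, hR, Complex.ofReal_re]
  · have h' := integral_im (μ := (volume : Measure ℝ)) hint
    simp only [RCLike.im_to_complex, him] at h'
    rw [h', h, hR, Complex.ofReal_im]

lemma RFF_gauss_integral {v : ℝ≥0} (hv : 0 < (v:ℝ)) (c : ℝ) :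
    (∫ x, Real.cos (c * x) ∂(gaussianReal 0 v)) = Real.exp (-(v:ℝ) * c ^ 2 / 2) ∧
    (∫ x, Real.sin (c * x) ∂(gaussianReal 0 v)) = 0 := by
  have hv0 : v ≠ 0 := fun h => by simp [h] at hv
  set a : ℝ := (2 * (v:ℝ))⁻¹ with ha_def
  have ha : (0:ℝ) < a := by positivity
  have key : ∀ g : ℝ → ℝ,
      (∫ x, g x ∂(gaussianReal 0 v))
        = (Real.sqrt (2 * π * v))⁻¹ * ∫ x, g x * Real.exp (-a * x ^ 2) := by
    intro g
    rw [gaussianReal_of_var_ne_zero 0 hv0]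
    have hpdf : gaussianPDF 0 v
        = fun x => ((Real.toNNReal (gaussianPDFReal 0 v x) : ℝ≥0) : ℝ≥0∞) := rfl
    rw [hpdf, integral_withDensity_eq_integral_smul
      ((measurable_gaussianPDFReal 0 v).real_toNNReal), ← integral_const_mul]
    congr 1 with x
    rw [NNReal.smul_def, Real.coe_toNNReal _ (gaussianPDFReal_nonneg 0 v x),
      gaussianPDFReal_def]
    have harg : -(x - 0) ^ 2 / (2 * (v:ℝ)) = -a * x ^ 2 := by
      rw [ha_def]; ring
    simp only [smul_eq_mul, harg]
    ring
  have hsqrt : Real.sqrt (π / a) = Real.sqrt (2 * π * v) := by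
    congr 1
    rw [ha_def]
    field_simp
  have hne : Real.sqrt (2 * π * (v:ℝ)) ≠ 0 := by
    refine ne_of_gt (Real.sqrt_pos.2 ?_)
    positivity
  constructor
  · rw [key, (RFF_cos_sin_integral ha c).1, hsqrt, ← mul_assoc, inv_mul_cancel₀ hne, one_mul]
    congr 1
    rw [ha_def]
    field_simp
    ring
  · rw [key, (RFF_cos_sin_integral ha c).2, mul_zero]

lemma RFF_integrable_of_le_one {Ω : Type*} [MeasurableSpace Ω] {μ : Measure Ω}
    [IsProbabilityMeasure μ] {f : Ω → ℝ} (hf : Measurable f) (hb : ∀ ω, |f ω| ≤ 1) :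
    Integrable f μ :=
  (integrable_const 1).mono' hf.aestronglyMeasurable
    (Filter.Eventually.of_forall (by simpa [Real.norm_eq_abs] using hb))

lemma RFF_exp_sum {Ω : Type*} [MeasurableSpace Ω] {μ : Measure Ω} [IsProbabilityMeasure μ]
    {d : ℕ} {v : ℝ≥0} (hv : 0 < (v:ℝ)) (V : Fin d → Ω → ℝ)
    (hmeas : ∀ k, Measurable (V k))
    (hgauss : ∀ k, Measure.map (V k) μ = gaussianReal 0 v)
    (t : Fin d → ℝ)
    (hind : ∀ (s : Finset (Fin d)) (a : Fin d), a ∉ s →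
        IndepFun (fun ω => ∑ k ∈ s, t k * V k ω) (V a) μ)
    (s : Finset (Fin d)) :
    (∫ ω, Real.cos (∑ k ∈ s, t k * V k ω) ∂μ)
        = Real.exp (-(v:ℝ) * (∑ k ∈ s, t k ^ 2) / 2) ∧
    (∫ ω, Real.sin (∑ k ∈ s, t k * V k ω) ∂μ) = 0 := by
  classical
  induction s using Finset.induction_on with
  | empty => simp
  | @insert a s has IH =>
    have hSmeas : Measurable (fun ω => ∑ k ∈ s, t k * V k ω) :=
      Finset.measurable_sum s fun k _ => (hmeas k).const_mul (t k)
    have hVa : Measurable (fun ω => t a * V a ω) := (hmeas a).const_mul (t a)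
    -- base integrals for the single variable
    have hmapint : ∀ g : ℝ → ℝ, Measurable g →
        (∫ ω, g (t a * V a ω) ∂μ) = ∫ x, g (t a * x) ∂(gaussianReal 0 v) := by
      intro g hg
      rw [← hgauss a, integral_map (hmeas a).aemeasurable]
      exact (hg.comp (measurable_const_mul (t a))).aestronglyMeasurable
    have hcos1 : (∫ ω, Real.cos (t a * V a ω) ∂μ) = Real.exp (-(v:ℝ) * t a ^ 2 / 2) := by
      rw [hmapint _ Real.measurable_cos]; exact (RFF_gauss_integral hv (t a)).1
    have hsin1 : (∫ ω, Real.sin (t a * V a ω) ∂μ) = 0 := by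
      rw [hmapint _ Real.measurable_sin]; exact (RFF_gauss_integral hv (t a)).2
    -- independence of the composed functions
    have hI := hind s a has
    have hIcc : IndepFun (fun ω => Real.cos (∑ k ∈ s, t k * V k ω))
        (fun ω => Real.cos (t a * V a ω)) μ :=
      hI.comp Real.measurable_cos (Real.measurable_cos.comp (measurable_const_mul (t a)))
    have hIss : IndepFun (fun ω => Real.sin (∑ k ∈ s, t k * V k ω))
        (fun ω => Real.sin (t a * V a ω)) μ :=
      hI.comp Real.measurable_sin (Real.measurable_sin.comp (measurable_const_mul (t a)))
    have hIcs : IndepFun (fun ω => Real.cos (∑ k ∈ s, t k * V k ω))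
        (fun ω => Real.sin (t a * V a ω)) μ :=
      hI.comp Real.measurable_cos (Real.measurable_sin.comp (measurable_const_mul (t a)))
    have hIsc : IndepFun (fun ω => Real.sin (∑ k ∈ s, t k * V k ω))
        (fun ω => Real.cos (t a * V a ω)) μ :=
      hI.comp Real.measurable_sin (Real.measurable_cos.comp (measurable_const_mul (t a)))
    have hintcosS : Integrable (fun ω => Real.cos (∑ k ∈ s, t k * V k ω)) μ :=
      RFF_integrable_of_le_one (Real.measurable_cos.comp hSmeas)
        (fun ω => Real.abs_cos_le_one _)
    have hintsinS : Integrable (fun ω => Real.sin (∑ k ∈ s, t k * V k ω)) μ :=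
      RFF_integrable_of_le_one (Real.measurable_sin.comp hSmeas)
        (fun ω => Real.abs_sin_le_one _)
    have hintcosA : Integrable (fun ω => Real.cos (t a * V a ω)) μ :=
      RFF_integrable_of_le_one (Real.measurable_cos.comp hVa) (fun ω => Real.abs_cos_le_one _)
    have hintsinA : Integrable (fun ω => Real.sin (t a * V a ω)) μ :=
      RFF_integrable_of_le_one (Real.measurable_sin.comp hVa) (fun ω => Real.abs_sin_le_one _)
    have hsum : ∀ ω, (∑ k ∈ insert a s, t k * V k ω)
        = (∑ k ∈ s, t k * V k ω) + t a * V a ω := by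
      intro ω; rw [Finset.sum_insert has]; ring
    constructor
    · have : (fun ω => Real.cos (∑ k ∈ insert a s, t k * V k ω))
          = fun ω => Real.cos (∑ k ∈ s, t k * V k ω) * Real.cos (t a * V a ω)
              - Real.sin (∑ k ∈ s, t k * V k ω) * Real.sin (t a * V a ω) := by
        funext ω; rw [hsum ω, Real.cos_add]
      have e1 : (∫ ω, Real.cos (∑ k ∈ s, t k * V k ω) * Real.cos (t a * V a ω) ∂μ)
          = (∫ ω, Real.cos (∑ k ∈ s, t k * V k ω) ∂μ) * ∫ ω, Real.cos (t a * V a ω) ∂μ :=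
        hIcc.integral_fun_mul_eq_mul_integral hintcosS.aestronglyMeasurable hintcosA.aestronglyMeasurable
      have e2 : (∫ ω, Real.sin (∑ k ∈ s, t k * V k ω) * Real.sin (t a * V a ω) ∂μ)
          = (∫ ω, Real.sin (∑ k ∈ s, t k * V k ω) ∂μ) * ∫ ω, Real.sin (t a * V a ω) ∂μ :=
        hIss.integral_fun_mul_eq_mul_integral hintsinS.aestronglyMeasurable hintsinA.aestronglyMeasurable
      have i1 : Integrable (fun ω => Real.cos (∑ k ∈ s, t k * V k ω) * Real.cos (t a * V a ω)) μ :=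
        hIcc.integrable_mul hintcosS hintcosA
      have i2 : Integrable (fun ω => Real.sin (∑ k ∈ s, t k * V k ω) * Real.sin (t a * V a ω)) μ :=
        hIss.integrable_mul hintsinS hintsinA
      rw [this, integral_sub i1 i2, e1, e2, IH.1, IH.2, hcos1, hsin1, Finset.sum_insert has, ← Real.exp_add]
      rw [zero_mul, sub_zero, Real.exp_eq_exp]
      ring
    · have : (fun ω => Real.sin (∑ k ∈ insert a s, t k * V k ω))
          = fun ω => Real.sin (∑ k ∈ s, t k * V k ω) * Real.cos (t a * V a ω)
              + Real.cos (∑ k ∈ s, t k * V k ω) * Real.sin (t a * V a ω) := by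
        funext ω; rw [hsum ω, Real.sin_add]
      have e1 : (∫ ω, Real.sin (∑ k ∈ s, t k * V k ω) * Real.cos (t a * V a ω) ∂μ)
          = (∫ ω, Real.sin (∑ k ∈ s, t k * V k ω) ∂μ) * ∫ ω, Real.cos (t a * V a ω) ∂μ :=
        hIsc.integral_fun_mul_eq_mul_integral hintsinS.aestronglyMeasurable hintcosA.aestronglyMeasurable
      have e2 : (∫ ω, Real.cos (∑ k ∈ s, t k * V k ω) * Real.sin (t a * V a ω) ∂μ)
          = (∫ ω, Real.cos (∑ k ∈ s, t k * V k ω) ∂μ) * ∫ ω, Real.sin (t a * V a ω) ∂μ :=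
        hIcs.integral_fun_mul_eq_mul_integral hintcosS.aestronglyMeasurable hintsinA.aestronglyMeasurable
      have i1 : Integrable (fun ω => Real.sin (∑ k ∈ s, t k * V k ω) * Real.cos (t a * V a ω)) μ :=
        hIsc.integrable_mul hintsinS hintcosA
      have i2 : Integrable (fun ω => Real.cos (∑ k ∈ s, t k * V k ω) * Real.sin (t a * V a ω)) μ :=
        hIcs.integrable_mul hintcosS hintsinA
      rw [this, integral_add i1 i2, e1, e2, IH.2, hsin1]
      ring

lemma RFF_variance_congr {Ω : Type*} [MeasurableSpace Ω] {μ : Measure Ω} {X Y : Ω → ℝ}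
    (h : X =ᵐ[μ] Y) : variance X μ = variance Y μ := by
  have hI : μ[X] = μ[Y] := integral_congr_ae h
  rw [variance, variance, evariance, evariance]
  congr 1
  refine lintegral_congr_ae (h.mono fun ω hω => ?_)
  simp only [hω, hI]

lemma RFF_iIndepFun_congr {Ω ι : Type*} [MeasurableSpace Ω] {μ : Measure Ω}
    {f g : ι → Ω → ℝ} (h : iIndepFun f μ)
    (hfg : ∀ i, f i =ᵐ[μ] g i) : iIndepFun g μ := by
  rw [iIndepFun_iff_measure_inter_preimage_eq_mul] at h ⊢
  intro S sets hsets
  have hiff : ∀ i ∈ S, (f i ⁻¹' sets i : Set Ω) =ᵐ[μ] (g i ⁻¹' sets i) := by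
    intro i _
    filter_upwards [hfg i] with ω hω
    change sets i (f i ω) = sets i (g i ω)
    rw [hω]
  have h1 : μ (⋂ i ∈ S, g i ⁻¹' sets i) = μ (⋂ i ∈ S, f i ⁻¹' sets i) := by
    refine measure_congr ?_
    have h' : ∀ᵐ ω ∂μ, ∀ i ∈ S, f i ω = g i ω :=
      (MeasureTheory.ae_ball_iff S.countable_toSet).2 fun i _ => hfg i
    filter_upwards [h'] with ω hω
    change (ω ∈ ⋂ i ∈ S, g i ⁻¹' sets i) = (ω ∈ ⋂ i ∈ S, f i ⁻¹' sets i)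
    rw [eq_iff_iff]
    simp only [Set.mem_iInter, Set.mem_preimage]
    exact ⟨fun hh i hi => by rw [hω i hi]; exact hh i hi,
      fun hh i hi => by rw [← hω i hi]; exact hh i hi⟩
  rw [h1, h S hsets]
  exact Finset.prod_congr rfl fun i hi => measure_congr (hiff i hi)

lemma RFF_inner_eq {d D : ℕ} (w : Fin D → EuclideanSpace ℝ (Fin d))
    (x y : EuclideanSpace ℝ (Fin d)) :
    ⟪randomFeatureMap w x, randomFeatureMap w y⟫
      = ∑ i : Fin D, (1/(D:ℝ)) * Real.cos (∑ k : Fin d, (x - y) k * w i k) := by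
  unfold randomFeatureMap
  rw [PiLp.inner_apply]
  simp only [RCLike.inner_apply, conj_trivial]
  rw [Fintype.sum_sum_type]
  simp only [Sum.elim_inl, Sum.elim_inr]
  rw [← Finset.sum_add_distrib]
  refine Finset.sum_congr rfl fun i _ => ?_
  have h1 : ⟪w i, x⟫ - ⟪w i, y⟫ = ∑ k : Fin d, (x - y) k * w i k := by
    rw [← inner_sub_right, PiLp.inner_apply]
    simp only [RCLike.inner_apply, conj_trivial]
  rw [← h1, Real.cos_sub]
  set sD : ℝ := Real.sqrt (1/(D:ℝ)) with hsD
  have hs : sD * sD = 1/(D:ℝ) := Real.mul_self_sqrt (by positivity)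
  rw [← hs]
  ring

/-- Variance of random Fourier features: with `D ≥ 1` random vectors `w₁, …, w_D ∈ ℝ^d` whose
`D·d` coordinates are jointly independent `N(0, 1/σ²)` Gaussians,
`Var(φ(x)·φ(y)) = (1/(2D)) (1 − exp(−z²))²` where `z = ‖x − y‖/σ`. -/
theorem variance_randomFeatureMap_inner {d D : ℕ} (hD : 1 ≤ D) (σ : ℝ) (hσ : 0 < σ)
    {Ω : Type*} [MeasurableSpace Ω] (μ : Measure Ω) [IsProbabilityMeasure μ]
    (W : Fin D → Ω → EuclideanSpace ℝ (Fin d))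
    (hindep : iIndepFun
      (fun (p : Fin D × Fin d) ω => W p.1 ω p.2) μ)
    (hgauss : ∀ (i : Fin D) (j : Fin d),
      Measure.map (fun ω => W i ω j) μ = gaussianReal 0 ⟨1 / σ ^ 2, by positivity⟩)
    (x y : EuclideanSpace ℝ (Fin d)) :
    variance
        (fun ω => ⟪randomFeatureMap (fun i => W i ω) x, randomFeatureMap (fun i => W i ω) y⟫) μ =
      1 / (2 * D) * (1 - Real.exp (-(‖x - y‖ / σ) ^ 2)) ^ 2 := by
  classical
  set v : ℝ≥0 := ⟨1 / σ ^ 2, by positivity⟩ with hvdef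
  have hv : 0 < (v:ℝ) := by
    have h : (v:ℝ) = 1/σ^2 := rfl
    rw [h]; positivity
  set t : Fin d → ℝ := fun k => (x - y) k with ht
  set V : Fin D × Fin d → Ω → ℝ := fun p ω => W p.1 ω p.2 with hVdef
  have hgaussV : ∀ p : Fin D × Fin d, Measure.map (V p) μ = gaussianReal 0 v :=
    fun p => hgauss p.1 p.2
  have haem : ∀ p, AEMeasurable (V p) μ := by
    intro p
    by_contra hc
    have h0 := Measure.map_of_not_aemeasurable hc
    rw [hgaussV p] at h0
    have h1 := (inferInstance : IsProbabilityMeasure (gaussianReal 0 v)).measure_univ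
    rw [h0] at h1
    simp at h1
  set V' : Fin D × Fin d → Ω → ℝ := fun p => (haem p).mk (V p) with hV'def
  have hmeas' : ∀ p, Measurable (V' p) := fun p => (haem p).measurable_mk
  have heq : ∀ p, V p =ᵐ[μ] V' p := fun p => (haem p).ae_eq_mk
  have hgauss' : ∀ p, Measure.map (V' p) μ = gaussianReal 0 v := fun p => by
    rw [← Measure.map_congr (heq p)]; exact hgaussV p
  have hindep' : iIndepFun V' μ := RFF_iIndepFun_congr hindep heq
  set X : Fin D → Ω → ℝ := fun i ω => Real.cos (∑ k : Fin d, t k * V' (i, k) ω) with hX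
  have hXmeas : ∀ i, Measurable (X i) := fun i =>
    Real.measurable_cos.comp (Finset.measurable_sum _ fun k _ => (hmeas' (i,k)).const_mul (t k))
  have hXmem : ∀ i, MemLp (X i) 2 μ := fun i =>
    MemLp.of_bound (hXmeas i).aestronglyMeasurable 1
      (Filter.Eventually.of_forall fun ω => by
        simpa [Real.norm_eq_abs] using Real.abs_cos_le_one _)
  -- Step A : rewrite the integrand a.e.
  have hae : (fun ω => ⟪randomFeatureMap (fun i => W i ω) x, randomFeatureMap (fun i => W i ω) y⟫)
      =ᵐ[μ] fun ω => (1/(D:ℝ)) * ∑ i : Fin D, X i ω := by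
    have hall : ∀ᵐ ω ∂μ, ∀ p : Fin D × Fin d, V p ω = V' p ω := by
      rw [ae_all_iff]; exact fun p => heq p
    filter_upwards [hall] with ω hω
    rw [RFF_inner_eq (fun i => W i ω) x y, Finset.mul_sum]
    refine Finset.sum_congr rfl fun i _ => ?_
    congr 2
    refine Finset.sum_congr rfl fun k _ => ?_
    rw [← hω (i,k)]
  rw [RFF_variance_congr hae]
  -- Step B : variance of a scaled sum of pairwise independent variables
  have hsum_eq : (fun ω => (1/(D:ℝ)) * ∑ i : Fin D, X i ω)
      = fun ω => (1/(D:ℝ)) * (∑ i : Fin D, X i) ω := by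
    funext ω; simp [Finset.sum_apply]
  rw [hsum_eq, variance_const_mul]
  -- embeddings of rows
  set e : Fin D → (Fin d ↪ Fin D × Fin d) :=
    fun i => ⟨fun k => (i, k), fun a b hab => congrArg Prod.snd hab⟩ with he
  have hpair : Set.Pairwise ↑(Finset.univ : Finset (Fin D)) fun i j => IndepFun (X i) (X j) μ := by
    intro i _ j _ hij
    have hdisj : Disjoint (Finset.univ.map (e i)) (Finset.univ.map (e j)) := by
      rw [Finset.disjoint_left]
      rintro p hp hq
      rw [Finset.mem_map] at hp hq
      obtain ⟨a, _, ha⟩ := hp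
      obtain ⟨b, _, hb⟩ := hq
      exact hij (congrArg Prod.fst (ha.trans hb.symm))
    have hfin := hindep'.indepFun_finset (Finset.univ.map (e i)) (Finset.univ.map (e j)) hdisj
      (fun p => hmeas' p)
    have hgi : Measurable (fun u : (↥(Finset.univ.map (e i)) → ℝ) =>
        Real.cos (∑ k : Fin d, t k * u ⟨(i,k), Finset.mem_map_of_mem _ (Finset.mem_univ k)⟩)) :=
      Real.measurable_cos.comp
        (Finset.measurable_sum _ fun k _ => (measurable_pi_apply _).const_mul _)
    have hgj : Measurable (fun u : (↥(Finset.univ.map (e j)) → ℝ) =>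
        Real.cos (∑ k : Fin d, t k * u ⟨(j,k), Finset.mem_map_of_mem _ (Finset.mem_univ k)⟩)) :=
      Real.measurable_cos.comp
        (Finset.measurable_sum _ fun k _ => (measurable_pi_apply _).const_mul _)
    exact hfin.comp hgi hgj
  rw [IndepFun.variance_sum (fun i _ => hXmem i) hpair]
  -- row independence hypothesis for RFF_exp_sum
  have hrowind : ∀ (i : Fin D) (t' : Fin d → ℝ) (s : Finset (Fin d)) (a : Fin d), a ∉ s →
      IndepFun (fun ω => ∑ k ∈ s, t' k * V' (i,k) ω) (V' (i,a)) μ := by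
    intro i t' s a has
    have hdisj : Disjoint (s.map (e i)) ({(i,a)} : Finset (Fin D × Fin d)) := by
      rw [Finset.disjoint_left]
      rintro p hp hq
      rw [Finset.mem_singleton] at hq
      rw [Finset.mem_map] at hp
      obtain ⟨b, hb, hba⟩ := hp
      apply has
      have hba2 : b = a := congrArg Prod.snd (hba.trans hq)
      rwa [← hba2]
    have hfin := hindep'.indepFun_finset (s.map (e i)) {(i,a)} hdisj (fun p => hmeas' p)
    have hgl : Measurable (fun u : (↥(s.map (e i)) → ℝ) =>
        ∑ p ∈ s.attach, t' p.1 * u ⟨(i, p.1), Finset.mem_map_of_mem _ p.2⟩) :=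
      Finset.measurable_sum _ fun p _ => (measurable_pi_apply _).const_mul _
    have hgr : Measurable (fun u : (↥({(i,a)} : Finset (Fin D × Fin d)) → ℝ) =>
        u ⟨(i,a), Finset.mem_singleton_self _⟩) := measurable_pi_apply _
    have h2 := hfin.comp hgl hgr
    have hfun : (fun ω => ∑ p ∈ s.attach, t' p.1 * V' (i, p.1) ω)
        = (fun ω => ∑ k ∈ s, t' k * V' (i,k) ω) := by
      funext ω
      exact Finset.sum_attach s (fun k => t' k * V' (i,k) ω)
    rw [← hfun]
    exact h2
  -- expectations
  set T : ℝ := ∑ k : Fin d, t k ^ 2 with hT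
  have hEX : ∀ i, (∫ ω, X i ω ∂μ) = Real.exp (-(v:ℝ) * T / 2) := fun i =>
    (RFF_exp_sum hv (fun k => V' (i,k)) (fun k => hmeas' (i,k)) (fun k => hgauss' (i,k)) t
      (fun s a has => hrowind i t s a has) Finset.univ).1
  have hEX2 : ∀ i, (∫ ω, (X i ω) ^ 2 ∂μ)
      = 1/2 + Real.exp (-(v:ℝ) * (4 * T) / 2) / 2 := by
    intro i
    have hcos2 := (RFF_exp_sum hv (fun k => V' (i,k)) (fun k => hmeas' (i,k))
      (fun k => hgauss' (i,k)) (fun k => 2 * t k)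
      (fun s a has => hrowind i (fun k => 2 * t k) s a has) Finset.univ).1
    have hsum4 : (∑ k : Fin d, (2 * t k) ^ 2) = 4 * T := by
      rw [hT, Finset.mul_sum]
      exact Finset.sum_congr rfl fun k _ => by ring
    rw [hsum4] at hcos2
    have hptw : (fun ω => (X i ω) ^ 2)
        = fun ω => 1/2 + Real.cos (∑ k : Fin d, (2 * t k) * V' (i,k) ω) / 2 := by
      funext ω
      have harg : (2:ℝ) * ∑ k : Fin d, t k * V' (i,k) ω
          = ∑ k : Fin d, (2 * t k) * V' (i,k) ω := by
        rw [Finset.mul_sum]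
        exact Finset.sum_congr rfl fun k _ => by ring
      rw [hX]
      simp only []
      rw [Real.cos_sq, harg]
    rw [hptw]
    have hintc : Integrable (fun ω => Real.cos (∑ k : Fin d, (2 * t k) * V' (i,k) ω)) μ :=
      RFF_integrable_of_le_one
        (Real.measurable_cos.comp
          (Finset.measurable_sum _ fun k _ => (hmeas' (i,k)).const_mul _))
        (fun ω => Real.abs_cos_le_one _)
    rw [integral_add (integrable_const _) (hintc.div_const 2), integral_const]
    simp only [probReal_univ, measure_univ, ENNReal.toReal_one, smul_eq_mul, one_mul]
    rw [integral_div, hcos2]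
  -- per-row variance
  have hvar : ∀ i, variance (X i) μ
      = 1/2 + Real.exp (-(v:ℝ) * T) ^ 2 / 2 - Real.exp (-(v:ℝ) * T) := by
    intro i
    rw [variance_eq_sub (hXmem i)]
    have h1 : (μ[X i ^ 2] : ℝ) = ∫ ω, (X i ω) ^ 2 ∂μ := by
      congr 1
    have h2 : (μ[X i] : ℝ) = ∫ ω, X i ω ∂μ := rfl
    rw [h1, h2, hEX2 i, hEX i]
    have h3 : Real.exp (-(v:ℝ) * (4 * T) / 2) = Real.exp (-(v:ℝ) * T) ^ 2 := by
      rw [sq, ← Real.exp_add]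
      congr 1
      ring
    have h4 : Real.exp (-(v:ℝ) * T / 2) ^ 2 = Real.exp (-(v:ℝ) * T) := by
      rw [sq, ← Real.exp_add]
      congr 1
      ring
    rw [h3, h4]
  -- sum up
  have hsumvar : (∑ i : Fin D, variance (X i) μ)
      = D * (1/2 + Real.exp (-(v:ℝ) * T) ^ 2 / 2 - Real.exp (-(v:ℝ) * T)) := by
    rw [Finset.sum_congr rfl fun i _ => hvar i, Finset.sum_const, Finset.card_univ,
      Fintype.card_fin, nsmul_eq_mul]
  rw [hsumvar]
  -- final arithmetic
  have hDne : (D:ℝ) ≠ 0 := by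
    have : (0:ℝ) < D := by exact_mod_cast Nat.lt_of_lt_of_le Nat.zero_lt_one hD
    exact ne_of_gt this
  have hnorm : (‖x - y‖ / σ) ^ 2 = (v:ℝ) * T := by
    have hvT : (v:ℝ) = 1/σ^2 := rfl
    have hnz : ‖x - y‖ ^ 2 = T := by
      rw [hT, EuclideanSpace.norm_eq]
      rw [Real.sq_sqrt (Finset.sum_nonneg fun k _ => sq_nonneg _)]
      refine Finset.sum_congr rfl fun k _ => ?_
      rw [Real.norm_eq_abs, _root_.sq_abs]
    rw [div_pow, hnz, hvT]
    ring
  have hnorm2 : -(‖x - y‖ / σ) ^ 2 = -(v:ℝ) * T := by rw [hnorm]; ring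
  rw [hnorm2]
  set E : ℝ := Real.exp (-(v:ℝ) * T) with hE
  field_simp
  ring

end RFFHelpers
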